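/- Let P be a nonnegative irreducible square real matrix with spectral radius 1. Then the matrix M = I - P has a group inverse, i.e., there exists a matrix M# such that M M# M = M, M# M M# = M#, and M M# = M# M. -/

import Mathlib

open Matrix Polynomial Filter
open scoped ENNReal NNReal

set_option linter.unusedSectionVars false

section GroupInverseAux

variable {n : Type*} [Fintype n] [DecidableEq n]

attribute [local instance] Matrix.frobeniusSeminormedAddCommGroup
  Matrix.frobeniusNormedAddCommGroup Matrix.frobeniusNormedSpace
  Matrix.frobeniusNormedRing Matrix.frobeniusNormedAlgebra

lemma my_charmatrix_transpose {R : Type*} [CommRing R] (A : Matrix n n R) :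
    charmatrix Aᵀ = (charmatrix A)ᵀ := by
  ext i j
  by_cases h : i = j
  · subst h; simp
  · simp [Matrix.transpose_apply, charmatrix_apply_ne _ _ _ h,
      charmatrix_apply_ne _ _ _ (Ne.symm h)]


lemma my_charpoly_transpose {R : Type*} [CommRing R] (A : Matrix n n R) :
    Aᵀ.charpoly = A.charpoly := by
  rw [Matrix.charpoly, Matrix.charpoly, my_charmatrix_transpose, Matrix.det_transpose]


lemma my_eval_charpoly {R : Type*} [CommRing R] (A : Matrix n n R) (μ : R) :
    A.charpoly.eval μ = (μ • (1 : Matrix n n R) - A).det := by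
  rw [Matrix.charpoly, ← Polynomial.coe_evalRingHom, RingHom.map_det]
  congr 1
  ext i j
  by_cases h : i = j
  · subst h; simp [charmatrix_apply_eq, Matrix.one_apply]
  · simp [charmatrix_apply_ne _ _ _ h, Matrix.one_apply, h]


lemma my_mem_spectrum_iff (A : Matrix n n ℂ) (μ : ℂ) :
    μ ∈ spectrum ℂ A ↔ A.charpoly.IsRoot μ := by
  rw [spectrum.mem_iff, Matrix.isUnit_iff_isUnit_det, isUnit_iff_ne_zero, not_ne_iff,
    Polynomial.IsRoot, my_eval_charpoly]
  constructor
  · intro h; convert h using 2; rw [Algebra.algebraMap_eq_smul_one]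
  · intro h; convert h using 2; rw [Algebra.algebraMap_eq_smul_one]


lemma my_entry_le_frobenius (A : Matrix n n ℂ) (i j : n) : ‖A i j‖₊ ≤ ‖A‖₊ := by
  rw [Matrix.frobenius_nnnorm_def]
  have h1 : ‖A i j‖₊ = (‖A i j‖₊ ^ (2:ℝ)) ^ (1/2 : ℝ) := by
    rw [← NNReal.rpow_mul]; norm_num
  rw [h1]
  apply NNReal.rpow_le_rpow _ (by norm_num)
  calc ‖A i j‖₊ ^ (2:ℝ) ≤ ∑ j', ‖A i j'‖₊ ^ (2:ℝ) :=
        Finset.single_le_sum (f := fun j' => ‖A i j'‖₊ ^ (2:ℝ))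
          (fun _ _ => zero_le) (Finset.mem_univ j)
    _ ≤ ∑ i', ∑ j', ‖A i' j'‖₊ ^ (2:ℝ) :=
        Finset.single_le_sum (f := fun i' => ∑ j', ‖A i' j'‖₊ ^ (2:ℝ))
          (fun _ _ => zero_le) (Finset.mem_univ i)


lemma my_no_growth (P : Matrix n n ℝ)
    (hspec_le : ∀ μ : ℂ, (P.map (Complex.ofReal)).charpoly.IsRoot μ → ‖μ‖ ≤ 1)
    (hroot : ∀ μ : ℂ, μ ∈ spectrum ℂ (P.map (Complex.ofReal)) ↔
      (P.map (Complex.ofReal)).charpoly.IsRoot μ)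
    (m : ℕ) (hm : 0 < m) (C : ℝ) (hC : 0 < C) (α : ℝ) (hα : 1 < α)
    (hgrow : ∀ t : ℕ, C * α ^ t ≤ ‖(P.map (Complex.ofReal)) ^ (m * t)‖) : False := by
  set Pc := P.map (Complex.ofReal) with hPc
  haveI : CompleteSpace (Matrix n n ℂ) := FiniteDimensional.complete ℂ _
  have hα0 : (0:ℝ) < α := lt_trans one_pos hα
  have hρ : spectralRadius ℂ Pc ≤ 1 := by
    rw [spectralRadius]
    refine iSup₂_le fun μ hμ => ?_
    have := hspec_le μ ((hroot μ).mp hμ)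
    simpa [← ENNReal.coe_one, ENNReal.coe_le_coe, ← NNReal.coe_le_coe] using this
  have htend := spectrum.pow_nnnorm_pow_one_div_tendsto_nhds_spectralRadius Pc
  have hmt : Tendsto (fun t : ℕ => m * t) atTop atTop :=
    tendsto_atTop_mono (fun t => Nat.le_mul_of_pos_left t hm) tendsto_id
  have htend2 := htend.comp hmt
  set αnn : ℝ≥0 := Real.toNNReal α with hαnn
  have hαnnc : (αnn : ℝ) = α := Real.coe_toNNReal _ hα0.le
  have hαnn1 : 1 < αnn := by
    rw [← NNReal.coe_lt_coe, hαnnc, NNReal.coe_one]; exact hα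
  set β : ℝ≥0 := αnn ^ (1 / (2 * m) : ℝ) with hβ
  have hβ1 : 1 < β := by
    rw [← NNReal.coe_lt_coe, hβ, NNReal.coe_rpow, NNReal.coe_one, hαnnc]
    exact (Real.one_lt_rpow_iff_of_pos hα0).mpr (Or.inl ⟨hα, by positivity⟩)
  have hev : ∀ᶠ t : ℕ in atTop,
      (β : ℝ≥0∞) ≤ ((‖Pc ^ (m * t)‖₊ : ℝ≥0∞) ^ (1 / (m * t : ℕ) : ℝ)) := by
    have hsmall : Tendsto (fun t : ℕ => (α ^ (-(1:ℝ)/2)) ^ t) atTop (nhds 0) := by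
      apply tendsto_pow_atTop_nhds_zero_of_lt_one (by positivity)
      exact Real.rpow_lt_one_of_one_lt_of_neg hα (by norm_num)
    have hevC : ∀ᶠ t : ℕ in atTop, (α ^ (-(1:ℝ)/2)) ^ t ≤ C :=
      hsmall.eventually_le_const hC
    filter_upwards [hevC, eventually_ge_atTop 1] with t htC ht1
    have hb : α ^ ((t : ℝ)/2) ≤ ‖Pc ^ (m * t)‖ := by
      refine le_trans ?_ (hgrow t)
      have : α ^ ((t:ℝ)/2) = (α ^ (-(1:ℝ)/2)) ^ t * α ^ t := by
        rw [← Real.rpow_natCast (α ^ (-(1:ℝ)/2)) t, ← Real.rpow_natCast α t,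
          ← Real.rpow_mul hα0.le, ← Real.rpow_add hα0]
        ring_nf
      rw [this]
      exact mul_le_mul_of_nonneg_right htC (by positivity)
    have hb2 : αnn ^ ((t : ℝ)/2) ≤ ‖Pc ^ (m * t)‖₊ := by
      rw [← NNReal.coe_le_coe, NNReal.coe_rpow, coe_nnnorm, hαnnc]
      exact hb
    have hexp : ((t:ℝ)/2) * (1 / ((m * t : ℕ) : ℝ)) = 1 / (2 * m) := by
      have hmne : (m : ℝ) ≠ 0 := Nat.cast_ne_zero.mpr hm.ne'
      have htne : (t : ℝ) ≠ 0 := Nat.cast_ne_zero.mpr (by omega)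
      push_cast
      field_simp
    calc (β : ℝ≥0∞) = ((αnn ^ ((t : ℝ)/2)) ^ (1 / (m * t : ℕ) : ℝ) : ℝ≥0) := by
          rw [hβ, ← NNReal.rpow_mul, hexp]
      _ ≤ (‖Pc ^ (m * t)‖₊ : ℝ≥0∞) ^ (1 / (m * t : ℕ) : ℝ) := by
          rw [← ENNReal.coe_rpow_of_nonneg _ (by positivity : (0:ℝ) ≤ 1 / ((m * t : ℕ) : ℝ))]
          exact ENNReal.coe_le_coe.mpr
            (NNReal.rpow_le_rpow hb2 (by positivity : (0:ℝ) ≤ 1 / ((m * t : ℕ) : ℝ)))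
  have hle : (β : ℝ≥0∞) ≤ spectralRadius ℂ Pc := ge_of_tendsto htend2 hev
  have hcon : (β : ℝ≥0∞) ≤ 1 := hle.trans hρ
  rw [← ENNReal.coe_one, ENNReal.coe_le_coe] at hcon
  exact absurd hcon (not_le.mpr hβ1)


lemma my_pow_nonneg (P : Matrix n n ℝ) (h : ∀ i j, 0 ≤ P i j) (k : ℕ) :
    ∀ i j, 0 ≤ (P ^ k) i j := by
  induction k with
  | zero => intro i j; rw [pow_zero]; by_cases hij : i = j <;> simp [Matrix.one_apply, hij]
  | succ k ih =>
    intro i j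
    rw [pow_succ, Matrix.mul_apply]
    exact Finset.sum_nonneg fun l _ => mul_nonneg (ih i l) (h l j)


lemma my_mulVec_mono (A : Matrix n n ℝ) (hA : ∀ i j, 0 ≤ A i j) {u v : n → ℝ}
    (huv : ∀ i, u i ≤ v i) : ∀ i, A.mulVec u i ≤ A.mulVec v i := by
  intro i
  simp only [Matrix.mulVec, dotProduct]
  exact Finset.sum_le_sum fun l _ => mul_le_mul_of_nonneg_left (huv l) (hA i l)


lemma my_mulVec_nonneg (A : Matrix n n ℝ) (hA : ∀ i j, 0 ≤ A i j) {u : n → ℝ}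
    (hu : ∀ i, 0 ≤ u i) : ∀ i, 0 ≤ A.mulVec u i := by
  intro i
  exact Finset.sum_nonneg fun l _ => mul_nonneg (hA i l) (hu l)


lemma my_single_le_mulVec (A : Matrix n n ℝ) (hA : ∀ i j, 0 ≤ A i j) {u : n → ℝ}
    (hu : ∀ i, 0 ≤ u i) (i j : n) : A i j * u j ≤ A.mulVec u i :=
  Finset.single_le_sum (f := fun l => A i l * u l)
    (fun l _ => mul_nonneg (hA i l) (hu l)) (Finset.mem_univ j)


lemma my_key_a (P : Matrix n n ℝ) (hnonneg : ∀ i j, 0 ≤ P i j)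
    (hirr : ∀ i j, ∃ k : ℕ, 0 < (P ^ k) i j)
    (hspec_le : ∀ μ : ℂ, (P.map (Complex.ofReal)).charpoly.IsRoot μ → ‖μ‖ ≤ 1)
    (hroot : ∀ μ : ℂ, μ ∈ spectrum ℂ (P.map (Complex.ofReal)) ↔
      (P.map (Complex.ofReal)).charpoly.IsRoot μ)
    (u : n → ℝ) (hu0 : ∀ i, 0 ≤ u i) (hune : u ≠ 0)
    (hle : ∀ i, u i ≤ P.mulVec u i) :
    (∀ i, P.mulVec u i = u i) ∧ (∀ i, 0 < u i) := by
  obtain ⟨j0, hj0⟩ : ∃ i, 0 < u i := by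
    by_contra h
    push_neg at h
    exact hune (funext fun i => le_antisymm (h i) (hu0 i))
  haveI : Nonempty n := ⟨j0⟩
  have hstep : ∀ t : ℕ, ∀ i, u i ≤ (P ^ t).mulVec u i := by
    intro t
    induction t with
    | zero => intro i; simp [Matrix.one_mulVec]
    | succ t ih =>
      intro i
      have h1 : (P ^ (t+1)).mulVec u = (P ^ t).mulVec (P.mulVec u) := by
        rw [Matrix.mulVec_mulVec, ← pow_succ]
      rw [h1]
      exact le_trans (ih i) (my_mulVec_mono _ (my_pow_nonneg P hnonneg t) hle i)
  have heq : ∀ i, P.mulVec u i = u i := by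
    by_contra h
    push_neg at h
    obtain ⟨i0, hi0⟩ := h
    set z : n → ℝ := fun i => P.mulVec u i - u i with hz
    have hz0 : ∀ i, 0 ≤ z i := fun i => sub_nonneg.mpr (hle i)
    have hzpos : 0 < z i0 := sub_pos.mpr (lt_of_le_of_ne (hle i0) (Ne.symm hi0))
    set kf : n → ℕ := fun j => (hirr j i0).choose with hkf
    have hkfpos : ∀ j, 0 < (P ^ kf j) j i0 := fun j => (hirr j i0).choose_spec
    -- key: u j + (P^kf j) j i0 * z i0 ≤ (P^(kf j + 1)).mulVec u j
    have hkey : ∀ j, u j + (P ^ kf j) j i0 * z i0 ≤ (P ^ (kf j + 1)).mulVec u j := by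
      intro j
      have h1 : (P ^ (kf j + 1)).mulVec u = (P ^ kf j).mulVec (P.mulVec u) := by
        rw [Matrix.mulVec_mulVec, ← pow_succ]
      rw [h1]
      have h2 : P.mulVec u = fun i => u i + z i := by
        funext i; simp [hz]
      rw [h2]
      have h3 : (P ^ kf j).mulVec (fun i => u i + z i) j
          = (P ^ kf j).mulVec u j + (P ^ kf j).mulVec z j := by
        simp [Matrix.mulVec, dotProduct, mul_add, Finset.sum_add_distrib]
      rw [h3]
      have h4 : (P ^ kf j) j i0 * z i0 ≤ (P ^ kf j).mulVec z j :=
        my_single_le_mulVec _ (my_pow_nonneg P hnonneg _) hz0 j i0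
      have h5 : u j ≤ (P ^ kf j).mulVec u j := hstep _ j
      linarith
    set m : ℕ := (Finset.univ.sup kf) + 1 with hm
    have hmpos : 0 < m := Nat.succ_pos _
    have hPm : ∀ j, u j + (P ^ kf j) j i0 * z i0 ≤ (P ^ m).mulVec u j := by
      intro j
      refine le_trans (hkey j) ?_
      have hle' : kf j + 1 ≤ m := Nat.succ_le_succ (Finset.le_sup (Finset.mem_univ j))
      have h1 : (P ^ m).mulVec u = (P ^ (kf j + 1)).mulVec ((P ^ (m - (kf j + 1))).mulVec u) := by
        rw [Matrix.mulVec_mulVec, ← pow_add, Nat.add_sub_cancel' hle']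
      rw [h1]
      exact my_mulVec_mono _ (my_pow_nonneg P hnonneg _) (hstep _) j
    -- α
    set c : n → ℝ := fun j => (P ^ kf j) j i0 * z i0 with hc
    have hcpos : ∀ j, 0 < c j := fun j => mul_pos (hkfpos j) hzpos
    set ε : ℝ := Finset.univ.inf' Finset.univ_nonempty c with hε
    have hεpos : 0 < ε := (Finset.lt_inf'_iff _).mpr (fun j _ => hcpos j)
    have hεle : ∀ j, ε ≤ c j := fun j => Finset.inf'_le _ (Finset.mem_univ j)
    set cmax : ℝ := Finset.univ.sup' Finset.univ_nonempty u with hcmax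
    have hcmaxpos : 0 < cmax := lt_of_lt_of_le hj0 (Finset.le_sup' _ (Finset.mem_univ j0))
    have hcmaxle : ∀ j, u j ≤ cmax := fun j => Finset.le_sup' _ (Finset.mem_univ j)
    set α : ℝ := 1 + ε / cmax with hα
    have hα1 : 1 < α := by
      rw [hα]; nlinarith [div_pos hεpos hcmaxpos]
    have hPm' : ∀ j, u j + c j ≤ (P ^ m).mulVec u j := fun j => hPm j
    clear_value z kf c ε cmax α
    have hαu : ∀ j, α * u j ≤ (P ^ m).mulVec u j := by
      intro j
      refine le_trans ?_ (hPm' j)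
      have h6 : (ε / cmax) * u j ≤ ε := by
        rw [div_mul_eq_mul_div, div_le_iff₀ hcmaxpos]
        exact mul_le_mul_of_nonneg_left (hcmaxle j) hεpos.le
      have h7 : ε ≤ c j := hεle j
      have h8 : α * u j = u j + (ε / cmax) * u j := by rw [hα]; ring
      rw [h8]
      linarith
    -- iterate
    have hiter : ∀ t : ℕ, ∀ j, α ^ t * u j ≤ ((P ^ m) ^ t).mulVec u j := by
      intro t
      induction t with
      | zero => intro j; simp [Matrix.one_mulVec]
      | succ t ih =>
        intro j
        have h1 : ((P ^ m) ^ (t+1)).mulVec u = (P ^ m).mulVec (((P ^ m) ^ t).mulVec u) := by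
          rw [Matrix.mulVec_mulVec, ← pow_succ']
        rw [h1]
        have h2 : ∀ i, (α ^ t) * u i ≤ ((P ^ m) ^ t).mulVec u i := ih
        have h3 : (P ^ m).mulVec (fun i => α ^ t * u i) j
            ≤ (P ^ m).mulVec (((P ^ m) ^ t).mulVec u) j :=
          my_mulVec_mono _ (my_pow_nonneg P hnonneg m) h2 j
        refine le_trans ?_ h3
        have h4 : (P ^ m).mulVec (fun i => α ^ t * u i) j = α ^ t * (P ^ m).mulVec u j := by
          simp [Matrix.mulVec, dotProduct, Finset.mul_sum]
          congr 1
          funext l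
          ring
        rw [h4, pow_succ]
        have := hαu j
        have hαt : (0:ℝ) ≤ α ^ t := pow_nonneg (by linarith) t
        calc α ^ t * α * u j = α ^ t * (α * u j) := by ring
          _ ≤ α ^ t * (P ^ m).mulVec u j := mul_le_mul_of_nonneg_left (hαu j) hαt
    -- growth of norms
    set Pc := P.map (Complex.ofReal) with hPc
    have hmap : ∀ k : ℕ, Pc ^ k = (P ^ k).map (Complex.ofReal) := by
      intro k
      have h0 : Pc = (Complex.ofRealHom : ℝ →+* ℂ).mapMatrix P := rfl
      rw [h0, ← map_pow]
      rfl
    have hentry : ∀ k : ℕ, ∀ i j : n, (P ^ k) i j ≤ ‖Pc ^ k‖ := by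
      intro k i j
      have h1 : ‖(Pc ^ k) i j‖ ≤ ‖Pc ^ k‖ := by
        have := my_entry_le_frobenius (Pc ^ k) i j
        exact this
      have h2 : ‖(Pc ^ k) i j‖ = |(P ^ k) i j| := by
        rw [hmap k]
        simp [Matrix.map_apply, Complex.norm_real]
      rw [h2, abs_of_nonneg (my_pow_nonneg P hnonneg k i j)] at h1
      exact h1
    set s : ℝ := ∑ l, u l with hs
    have hspos : 0 < s :=
      lt_of_lt_of_le hj0 (Finset.single_le_sum (fun l _ => hu0 l) (Finset.mem_univ j0))
    have hgrow : ∀ t : ℕ, (u j0 / s) * α ^ t ≤ ‖Pc ^ (m * t)‖ := by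
      intro t
      have h1 : α ^ t * u j0 ≤ (P ^ (m * t)).mulVec u j0 := by
        rw [pow_mul]; exact hiter t j0
      have h2 : (P ^ (m * t)).mulVec u j0 ≤ ‖Pc ^ (m * t)‖ * s := by
        rw [hs, Finset.mul_sum]
        refine Finset.sum_le_sum fun l _ => ?_
        exact mul_le_mul_of_nonneg_right (hentry (m * t) j0 l) (hu0 l)
      rw [div_mul_eq_mul_div, div_le_iff₀ hspos]
      calc u j0 * α ^ t = α ^ t * u j0 := by ring
        _ ≤ ‖Pc ^ (m * t)‖ * s := le_trans h1 h2
    exact my_no_growth P hspec_le hroot m hmpos (u j0 / s) (div_pos hj0 hspos) α hα1 hgrow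
  -- positivity
  have hfix : ∀ k : ℕ, ∀ i, (P ^ k).mulVec u i = u i := by
    intro k
    induction k with
    | zero => intro i; simp [Matrix.one_mulVec]
    | succ k ih =>
      intro i
      have h1 : (P ^ (k+1)).mulVec u = (P ^ k).mulVec (P.mulVec u) := by
        rw [Matrix.mulVec_mulVec, ← pow_succ]
      rw [h1]
      have : P.mulVec u = u := funext heq
      rw [this]
      exact ih i
  refine ⟨heq, fun i => ?_⟩
  obtain ⟨k, hk⟩ := hirr i j0
  have h1 : (P ^ k) i j0 * u j0 ≤ (P ^ k).mulVec u i :=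
    my_single_le_mulVec _ (my_pow_nonneg P hnonneg k) hu0 i j0
  rw [hfix k i] at h1
  exact lt_of_lt_of_le (mul_pos hk hj0) h1


lemma my_fix (P : Matrix n n ℝ) {v : n → ℝ} (h : P.mulVec v = v) (k : ℕ) :
    (P ^ k).mulVec v = v := by
  induction k with
  | zero => simp [Matrix.one_mulVec]
  | succ k ih => rw [pow_succ, ← Matrix.mulVec_mulVec, h, ih]


lemma my_ker (P : Matrix n n ℝ) (hnonneg : ∀ i j, 0 ≤ P i j)
    (hirr : ∀ i j, ∃ k : ℕ, 0 < (P ^ k) i j)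
    (hspec_le : ∀ μ : ℂ, (P.map (Complex.ofReal)).charpoly.IsRoot μ → ‖μ‖ ≤ 1)
    (x : n → ℝ) (hx : (1 - P).mulVec ((1 - P).mulVec x) = 0) :
    (1 - P).mulVec x = 0 := by
  set y : n → ℝ := (1 - P).mulVec x with hy
  by_contra hyne
  have hPy : P.mulVec y = y := by
    have := hx
    rw [Matrix.sub_mulVec, Matrix.one_mulVec, sub_eq_zero] at this
    exact this.symm
  set u : n → ℝ := fun i => |y i| with hu
  have hu0 : ∀ i, 0 ≤ u i := fun i => abs_nonneg _
  have hune : u ≠ 0 := by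
    intro h
    apply hyne
    funext i
    have : u i = 0 := congrFun h i
    simpa [hu] using abs_eq_zero.mp this
  have hle : ∀ i, u i ≤ P.mulVec u i := by
    intro i
    have h1 : y i = ∑ l, P i l * y l := by
      conv_lhs => rw [← hPy]
      rfl
    calc u i = |∑ l, P i l * y l| := by rw [hu]; simp only; rw [← h1]
      _ ≤ ∑ l, |P i l * y l| := Finset.abs_sum_le_sum_abs _ _
      _ = ∑ l, P i l * u l := by
          refine Finset.sum_congr rfl fun l _ => ?_
          rw [abs_mul, abs_of_nonneg (hnonneg i l)]
      _ = P.mulVec u i := rfl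
  obtain ⟨hPu, hupos⟩ := my_key_a P hnonneg hirr hspec_le
    (fun μ => my_mem_spectrum_iff _ μ) u hu0 hune hle
  have hyne' : ∀ i, y i ≠ 0 := fun i h => by
    have := hupos i; rw [hu] at this; simp only at this; rw [h] at this; simp at this
  -- sign propagation
  have hsign_pos : ∀ (k : ℕ) (i j : n), 0 < (P ^ k) i j → 0 < y i → 0 < y j := by
    intro k i j hk hyi
    have hQy : (P ^ k).mulVec y = y := my_fix P hPy k
    have hQu : (P ^ k).mulVec u = fun i => u i := by
      have := my_fix P (funext hPu) k; rw [this]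
    by_contra hyj
    push_neg at hyj
    have hyj' : y j < 0 := lt_of_le_of_ne hyj (hyne' j)
    have hsum : ∑ l, (P ^ k) i l * (u l - y l) = 0 := by
      have h1 : ∑ l, (P ^ k) i l * u l = u i := by
        have := congrFun hQu i; simpa [Matrix.mulVec, dotProduct] using this
      have h2 : ∑ l, (P ^ k) i l * y l = y i := by
        have := congrFun hQy i; simpa [Matrix.mulVec, dotProduct] using this
      have h3 : u i = y i := by rw [hu]; simp only; rw [abs_of_pos hyi]
      simp only [mul_sub, Finset.sum_sub_distrib, h1, h2, h3, sub_self]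
    have hterm : ∀ l ∈ Finset.univ, 0 ≤ (P ^ k) i l * (u l - y l) := fun l _ =>
      mul_nonneg (my_pow_nonneg P hnonneg k i l)
        (by rw [hu]; simp only; linarith [le_abs_self (y l)])
    have := (Finset.sum_eq_zero_iff_of_nonneg hterm).mp hsum j (Finset.mem_univ j)
    have huj : 0 < u j - y j := by
      rw [hu]; simp only
      have := abs_nonneg (y j); linarith [neg_abs_le (y j)]
    nlinarith
  have hsign_neg : ∀ (k : ℕ) (i j : n), 0 < (P ^ k) i j → y i < 0 → y j < 0 := by
    intro k i j hk hyi
    have hQy : (P ^ k).mulVec y = y := my_fix P hPy k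
    have hQu : (P ^ k).mulVec u = fun i => u i := by
      have := my_fix P (funext hPu) k; rw [this]
    by_contra hyj
    push_neg at hyj
    have hyj' : 0 < y j := lt_of_le_of_ne hyj (Ne.symm (hyne' j))
    have hsum : ∑ l, (P ^ k) i l * (u l + y l) = 0 := by
      have h1 : ∑ l, (P ^ k) i l * u l = u i := by
        have := congrFun hQu i; simpa [Matrix.mulVec, dotProduct] using this
      have h2 : ∑ l, (P ^ k) i l * y l = y i := by
        have := congrFun hQy i; simpa [Matrix.mulVec, dotProduct] using this
      have h3 : u i = -y i := by rw [hu]; simp only; rw [abs_of_neg hyi]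
      simp only [mul_add, Finset.sum_add_distrib, h1, h2, h3]
      ring
    have hterm : ∀ l ∈ Finset.univ, 0 ≤ (P ^ k) i l * (u l + y l) := fun l _ =>
      mul_nonneg (my_pow_nonneg P hnonneg k i l)
        (by rw [hu]; simp only; linarith [neg_abs_le (y l)])
    have := (Finset.sum_eq_zero_iff_of_nonneg hterm).mp hsum j (Finset.mem_univ j)
    have huj : 0 < u j + y j := by
      rw [hu]; simp only
      linarith [le_abs_self (y j), abs_nonneg (y j)]
    nlinarith
  -- left eigenvector
  have hdet : (1 - Pᵀ).det = 0 := by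
    have h1 : (1 - P).det = 0 := by
      rw [← Matrix.exists_mulVec_eq_zero_iff]
      refine ⟨y, hyne, ?_⟩
      rw [Matrix.sub_mulVec, Matrix.one_mulVec, hPy, sub_self]
    rw [show (1 - Pᵀ) = (1 - P)ᵀ by rw [Matrix.transpose_sub, Matrix.transpose_one],
      Matrix.det_transpose]
    exact h1
  obtain ⟨w, hwne, hw⟩ := Matrix.exists_mulVec_eq_zero_iff.mpr hdet
  have hPtw : Pᵀ.mulVec w = w := by
    rw [Matrix.sub_mulVec, Matrix.one_mulVec, sub_eq_zero] at hw
    exact hw.symm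
  -- apply key_a to Pᵀ
  have htnonneg : ∀ i j, 0 ≤ Pᵀ i j := fun i j => hnonneg j i
  have htirr : ∀ i j, ∃ k : ℕ, 0 < (Pᵀ ^ k) i j := by
    intro i j
    obtain ⟨k, hk⟩ := hirr j i
    exact ⟨k, by rw [← Matrix.transpose_pow]; exact hk⟩
  have htspec : ∀ μ : ℂ, (Pᵀ.map (Complex.ofReal)).charpoly.IsRoot μ → ‖μ‖ ≤ 1 := by
    intro μ hμ
    apply hspec_le
    rwa [show Pᵀ.map (Complex.ofReal) = (P.map (Complex.ofReal))ᵀ by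
      rw [Matrix.transpose_map], my_charpoly_transpose] at hμ
  set w' : n → ℝ := fun i => |w i| with hw'
  have hw0 : ∀ i, 0 ≤ w' i := fun i => abs_nonneg _
  have hwne' : w' ≠ 0 := by
    intro h
    apply hwne
    funext i
    have : w' i = 0 := congrFun h i
    simpa [hw'] using abs_eq_zero.mp this
  have hwle : ∀ i, w' i ≤ Pᵀ.mulVec w' i := by
    intro i
    have h1 : w i = ∑ l, Pᵀ i l * w l := by
      conv_lhs => rw [← hPtw]
      rfl
    calc w' i = |∑ l, Pᵀ i l * w l| := by rw [hw']; simp only; rw [← h1]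
      _ ≤ ∑ l, |Pᵀ i l * w l| := Finset.abs_sum_le_sum_abs _ _
      _ = ∑ l, Pᵀ i l * w' l := by
          refine Finset.sum_congr rfl fun l _ => ?_
          rw [abs_mul, abs_of_nonneg (htnonneg i l)]
      _ = Pᵀ.mulVec w' i := rfl
  obtain ⟨hPw, hwpos⟩ := my_key_a Pᵀ htnonneg htirr htspec
    (fun μ => my_mem_spectrum_iff _ μ) w' hw0 hwne' hwle
  -- w' ⬝ y = 0
  have hdot : w' ⬝ᵥ y = 0 := by
    rw [hy, dotProduct_mulVec]
    have : w' ᵥ* (1 - P) = 0 := by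
      rw [Matrix.vecMul_sub, Matrix.vecMul_one, ← Matrix.mulVec_transpose, funext hPw, sub_self]
    rw [this, zero_dotProduct]
  -- sign dichotomy
  obtain ⟨i1⟩ : Nonempty n := by
    by_contra h
    exact hyne (funext fun i => absurd ⟨i⟩ h)
  rcases lt_or_gt_of_ne (hyne' i1) with hneg | hpos
  · have hall : ∀ j, y j < 0 := by
      intro j
      obtain ⟨k, hk⟩ := hirr i1 j
      exact hsign_neg k i1 j hk hneg
    have : w' ⬝ᵥ y < 0 := by
      apply Finset.sum_neg (fun l _ => mul_neg_of_pos_of_neg (hwpos l) (hall l))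
      exact ⟨i1, Finset.mem_univ i1⟩
    rw [hdot] at this; exact lt_irrefl 0 this
  · have hall : ∀ j, 0 < y j := by
      intro j
      obtain ⟨k, hk⟩ := hirr i1 j
      exact hsign_pos k i1 j hk hpos
    have : 0 < w' ⬝ᵥ y := by
      apply Finset.sum_pos (fun l _ => mul_pos (hwpos l) (hall l))
      exact ⟨i1, Finset.mem_univ i1⟩
    rw [hdot] at this; exact lt_irrefl 0 this


lemma my_eq_zero_of_mulVec (A : Matrix n n ℝ) (h : ∀ v, A.mulVec v = 0) : A = 0 := by
  ext i j
  have := congrFun (h (Pi.single j 1)) i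
  simpa using this


lemma my_group_inverse (M : Matrix n n ℝ)
    (hker : ∀ v : n → ℝ, M.mulVec (M.mulVec v) = 0 → M.mulVec v = 0) :
    ∃ S : Matrix n n ℝ, M * S * M = M ∧ S * M * S = S ∧ M * S = S * M := by
  have hchain : ∀ k : ℕ, 1 ≤ k → ∀ v, (M ^ k).mulVec v = 0 → M.mulVec v = 0 := by
    intro k
    induction k with
    | zero => omega
    | succ k ih =>
      intro _ v hv
      rcases Nat.eq_zero_or_pos k with hk0 | hkpos
      · subst hk0; rwa [pow_one] at hv
      · have h1 : (M ^ k).mulVec (M.mulVec v) = 0 := by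
          rwa [Matrix.mulVec_mulVec, ← pow_succ]
        exact hker v (ih hkpos (M.mulVec v) h1)
  set p := M.charpoly with hp
  have hpne : p ≠ 0 := (Matrix.charpoly_monic M).ne_zero
  obtain ⟨q, hq, hndvd⟩ := p.exists_eq_pow_rootMultiplicity_mul_and_not_dvd hpne 0
  set e := p.rootMultiplicity 0 with he
  have hq' : p = X ^ e * q := by rw [hq]; simp
  have hc0 : q.coeff 0 ≠ 0 := by
    intro h
    apply hndvd
    rw [map_zero, sub_zero, Polynomial.X_dvd_iff]
    exact h
  have hCH : (M ^ e) * Polynomial.aeval M q = 0 := by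
    have h1 := Matrix.aeval_self_charpoly M
    rw [← hp, hq', _root_.map_mul, map_pow, Polynomial.aeval_X] at h1
    exact h1
  have hMq : M * Polynomial.aeval M q = 0 := by
    rcases Nat.eq_zero_or_pos e with he0 | hepos
    · rw [he0, pow_zero, one_mul] at hCH
      rw [hCH, mul_zero]
    · apply my_eq_zero_of_mulVec
      intro v
      have h1 : (M ^ e).mulVec ((Polynomial.aeval M q).mulVec v) = 0 := by
        rw [Matrix.mulVec_mulVec, hCH, Matrix.zero_mulVec]
      have h2 := hchain e hepos _ h1
      rwa [Matrix.mulVec_mulVec] at h2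
  set c := q.coeff 0 with hcdef
  set s := q.divX with hsdef
  have hqs : q = X * s + C c := by rw [hsdef, hcdef, Polynomial.X_mul_divX_add]
  have hrel : M * M * Polynomial.aeval M s + c • M = 0 := by
    have h1 : Polynomial.aeval M q
        = M * Polynomial.aeval M s + c • (1 : Matrix n n ℝ) := by
      rw [hqs, map_add, _root_.map_mul, Polynomial.aeval_X, Polynomial.aeval_C,
        Algebra.algebraMap_eq_smul_one]
    have h2 := hMq
    rw [h1, mul_add, ← mul_assoc] at h2
    rw [← h2]
    congr 1
    rw [mul_smul_comm, mul_one]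
  set N : Matrix n n ℝ := (-c⁻¹) • Polynomial.aeval M s with hN
  have hMN : M * N = N * M := by
    rw [hN, Matrix.mul_smul, Matrix.smul_mul]
    congr 1
    have h1 : Polynomial.aeval M s * Polynomial.aeval M (X : ℝ[X])
        = Polynomial.aeval M (X : ℝ[X]) * Polynomial.aeval M s := by
      rw [← _root_.map_mul, ← _root_.map_mul, mul_comm]
    rw [Polynomial.aeval_X] at h1
    exact h1.symm
  have hM2N : M * M * N = M := by
    rw [hN, Matrix.mul_smul]
    have h1 : M * M * Polynomial.aeval M s = -(c • M) := by
      rw [eq_neg_iff_add_eq_zero]; exact hrel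
    rw [h1, smul_neg, neg_smul, neg_neg, smul_smul, inv_mul_cancel₀ hc0, one_smul]
  refine ⟨M * N * N, ?_, ?_, ?_⟩
  · calc M * (M * N * N) * M = (M * M * N) * (N * M) := by
          simp only [mul_assoc]
      _ = M * (N * M) := by rw [hM2N]
      _ = M * (M * N) := by rw [hMN]
      _ = M * M * N := by rw [mul_assoc]
      _ = M := hM2N
  · have hSM : M * N * N * M = M * N := by
      calc M * N * N * M = M * N * (N * M) := by simp only [mul_assoc]
        _ = M * N * (M * N) := by rw [hMN]
        _ = (M * (N * M)) * N := by simp only [mul_assoc]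
        _ = (M * (M * N)) * N := by rw [hMN]
        _ = (M * M * N) * N := by simp only [mul_assoc]
        _ = M * N := by rw [hM2N]
    calc M * N * N * M * (M * N * N) = (M * N * N * M) * (M * N * N) := by
          simp only [mul_assoc]
      _ = (M * N) * (M * N * N) := by rw [hSM]
      _ = ((M * (N * M)) * N) * N := by simp only [mul_assoc]
      _ = ((M * (M * N)) * N) * N := by rw [hMN]
      _ = (M * M * N) * (N * N) := by simp only [mul_assoc]
      _ = M * (N * N) := by rw [hM2N]
      _ = M * N * N := by simp only [mul_assoc]
  · have hSM : M * N * N * M = M * N := by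
      calc M * N * N * M = M * N * (N * M) := by simp only [mul_assoc]
        _ = M * N * (M * N) := by rw [hMN]
        _ = (M * (N * M)) * N := by simp only [mul_assoc]
        _ = (M * (M * N)) * N := by rw [hMN]
        _ = (M * M * N) * N := by simp only [mul_assoc]
        _ = M * N := by rw [hM2N]
    calc M * (M * N * N) = (M * M * N) * N := by simp only [mul_assoc]
      _ = M * N := by rw [hM2N]
      _ = M * N * N * M := hSM.symm

end GroupInverseAux

/-- If `P` is a nonnegative irreducible square real matrix with spectral
radius 1, then `M = I - P` has a group inverse. -/
theorem group_inverse_exists_of_irreducible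
    {n : Type*} [Fintype n] [DecidableEq n] (P : Matrix n n ℝ)
    (hnonneg : ∀ i j, 0 ≤ P i j)
    (hirr : ∀ i j, ∃ k : ℕ, 0 < (P ^ k) i j)
    (hspec_le : ∀ μ : ℂ, (P.map (Complex.ofReal)).charpoly.IsRoot μ → ‖μ‖ ≤ 1)
    (hspec_eq : ∃ μ : ℂ, (P.map (Complex.ofReal)).charpoly.IsRoot μ ∧ ‖μ‖ = 1) :
    ∃ Msharp : Matrix n n ℝ,
      (1 - P) * Msharp * (1 - P) = (1 - P) ∧
      Msharp * (1 - P) * Msharp = Msharp ∧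
      (1 - P) * Msharp = Msharp * (1 - P) := by
  exact my_group_inverse (1 - P) (fun v hv => my_ker P hnonneg hirr hspec_le v hv)
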